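/- Let n and ℓ be integers with 3 ≤ ℓ ≤ n−2, and let s : E → {−1,1} be a consistent sign pattern with s({0,ℓ}) = −1 and s(e) = 1 for every chord e of length strictly less than ℓ. Extend s to all unordered pairs by setting s̄(p) = s(p) if p is a chord and s̄(p) = 1 otherwise. Then for every integer i with ℓ+1 ≤ i ≤ n−1, writing M_i = ∏_{k=2}^{ℓ−2} s̄({i,k}), none of the following three sign tuples occurs: (M_i, s̄({i,0}), s̄({1,i}), s̄({ℓ−1,i}), s̄({ℓ,i})) = (−1, 1, 1, 1, 1), or = (1, 1, −1, 1, 1), or = (1, 1, 1, −1, 1). -/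

import Mathlib

namespace M0n

/-- `{i, j}` is a chord of the `n`-gon: `j ∉ {i-1, i, i+1}`. -/
def IsChord (n : ℕ) (p : Sym2 (ZMod n)) : Prop :=
  ∀ i j : ZMod n, p = s(i, j) → j ≠ i - 1 ∧ j ≠ i ∧ j ≠ i + 1

instance (n : ℕ) [NeZero n] : DecidablePred (IsChord n) := fun p =>
  inferInstanceAs (Decidable (∀ i j : ZMod n, p = s(i, j) → j ≠ i - 1 ∧ j ≠ i ∧ j ≠ i + 1))

/-- The finite set `E` of chords of the `n`-gon. -/
def chords (n : ℕ) [NeZero n] : Finset (Sym2 (ZMod n)) :=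
  Finset.univ.filter (IsChord n)

/-- `x` lies in the cyclic open interval `{i+1, …, j-1}` from `i` to `j`. -/
def CycBtw {n : ℕ} (i x j : ZMod n) : Prop :=
  0 < (x - i).val ∧ (x - i).val < (j - i).val

instance {n : ℕ} (i x j : ZMod n) : Decidable (CycBtw i x j) :=
  inferInstanceAs (Decidable (0 < (x - i).val ∧ (x - i).val < (j - i).val))

/-- Two chords cross: exactly one endpoint of `q` lies in the cyclic open interval
from `i` to `j`, for every ordered representation `(i, j)` of `p`. -/
def Crosses (n : ℕ) (p q : Sym2 (ZMod n)) : Prop :=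
  ∀ i j k l : ZMod n, p = s(i, j) → q = s(k, l) → Xor' (CycBtw i k j) (CycBtw i l j)

instance (n : ℕ) [NeZero n] (p q : Sym2 (ZMod n)) : Decidable (Crosses n p q) :=
  inferInstanceAs (Decidable (∀ i j k l : ZMod n,
    p = s(i, j) → q = s(k, l) → Xor (CycBtw i k j) (CycBtw i l j)))

/-- The dihedral coordinate (cross-ratio)
`u_{ij}(z) = ((z i - z (j+1)) (z (i+1) - z j)) / ((z i - z j) (z (i+1) - z (j+1)))`,
well defined on unordered pairs. -/
def u {n : ℕ} {K : Type*} [Field K] (z : ZMod n → K) : Sym2 (ZMod n) → K :=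
  Sym2.lift ⟨fun i j =>
    ((z i - z (j + 1)) * (z (i + 1) - z j)) / ((z i - z j) * (z (i + 1) - z (j + 1))), by
      intro i j
      have h1 : (z i - z (j + 1)) * (z (i + 1) - z j)
          = (z j - z (i + 1)) * (z (j + 1) - z i) := by ring
      have h2 : (z i - z j) * (z (i + 1) - z (j + 1))
          = (z j - z i) * (z (j + 1) - z (i + 1)) := by ring
      dsimp only
      rw [h1, h2]⟩

/-- The cyclic interval `{a, a+1, …, a+m-1}` in `ZMod n`. -/
def cycInt {n : ℕ} (a : ZMod n) (m : ℕ) : Finset (ZMod n) :=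
  (Finset.range m).image fun t : ℕ => a + (t : ZMod n)

/-- A partition of `ZMod n` into four nonempty cyclic intervals `A, B, C, D`
appearing in this cyclic order. -/
structure CyclicFourPartition (n : ℕ) where
  a : ZMod n
  p : ℕ
  q : ℕ
  r : ℕ
  t : ℕ
  hp : 0 < p
  hq : 0 < q
  hr : 0 < r
  ht : 0 < t
  hsum : p + q + r + t = n

namespace CyclicFourPartition

variable {n : ℕ} (P : CyclicFourPartition n)

def A : Finset (ZMod n) := cycInt P.a P.p
def B : Finset (ZMod n) := cycInt (P.a + (P.p : ZMod n)) P.q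
def C : Finset (ZMod n) := cycInt (P.a + (P.p : ZMod n) + (P.q : ZMod n)) P.r
def D : Finset (ZMod n) := cycInt (P.a + (P.p : ZMod n) + (P.q : ZMod n) + (P.r : ZMod n)) P.t

end CyclicFourPartition

/-- A sign pattern is consistent if it does not contradict any extended u-relation:
for every cyclic 4-partition `(A,B,C,D)`, one of the two products of signs is `1`. -/
def Consistent (n : ℕ) (s : Sym2 (ZMod n) → ℤ) : Prop :=
  ∀ P : CyclicFourPartition n,
    (∏ x ∈ P.A, ∏ y ∈ P.C, s s(x, y)) = 1 ∨ (∏ x ∈ P.B, ∏ y ∈ P.D, s s(x, y)) = 1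

/-- A sign pattern is realizable if it is the sign vector of the dihedral coordinates
of some injective real configuration. -/
def Realizable (n : ℕ) [NeZero n] (s : Sym2 (ZMod n) → ℤ) : Prop :=
  ∃ z : ZMod n → ℝ, Function.Injective z ∧ ∀ e ∈ chords n, Real.sign (u z e) = (s e : ℝ)

/-- The length of a chord `{i,j}`: `min (d, n - d)` where `d = (j - i).val`. -/
def chordLength (n : ℕ) (p : Sym2 (ZMod n)) : ℕ :=
  Sym2.lift ⟨fun i j => min (j - i).val (i - j).val, fun _ _ => min_comm _ _⟩ p

/-- `Neg z`: the number of negative chords of a real configuration. -/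
noncomputable def negCount (n : ℕ) [NeZero n] (z : ZMod n → ℝ) : ℕ :=
  Set.ncard {e : Sym2 (ZMod n) | e ∈ chords n ∧ u z e < 0}

/-- The set of real points of `M_{0,n}` in its dihedral embedding:
nowhere-zero real solutions of all primitive u-relations in `ℝ^E`. -/
def Vset (n : ℕ) [NeZero n] : Set ({e : Sym2 (ZMod n) // e ∈ chords n} → ℝ) :=
  {w | (∀ c, w c ≠ 0) ∧ ∀ c,
    w c + ∏ e ∈ Finset.univ.filter
        (fun e : {e : Sym2 (ZMod n) // e ∈ chords n} => Crosses n e.1 c.1), w e = 1}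

/-- The part `M_{0,n}(ℝ_s)` of `V` in the open orthant given by the sign pattern `s`. -/
def VsSet (n : ℕ) [NeZero n] (s : Sym2 (ZMod n) → ℤ) :
    Set ({e : Sym2 (ZMod n) // e ∈ chords n} → ℝ) :=
  {w ∈ Vset n | ∀ c : {e : Sym2 (ZMod n) // e ∈ chords n}, Real.sign (w c) = (s c.1 : ℝ)}

lemma aux_ne {n : ℕ} [NeZero n] (i j : ZMod n) (h2 : 2 ≤ (j - i).val)
    (hn : (j - i).val + 2 ≤ n) : j ≠ i - 1 ∧ j ≠ i ∧ j ≠ i + 1 := by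
  have hn4 : 4 ≤ n := by omega
  refine ⟨?_, ?_, ?_⟩
  · intro h
    have e1 : ((n - 1 : ℕ) : ZMod n) = -1 := by
      push_cast [Nat.cast_sub (by omega : 1 ≤ n)]
      simp [ZMod.natCast_self]
    have : j - i = ((n - 1 : ℕ) : ZMod n) := by rw [h, e1]; ring
    rw [this, ZMod.val_natCast_of_lt (by omega)] at h2 hn
    omega
  · intro h
    rw [h, sub_self, ZMod.val_zero] at h2
    omega
  · intro h
    have e1 : j - i = ((1 : ℕ) : ZMod n) := by rw [h]; push_cast; ring
    rw [e1, ZMod.val_natCast_of_lt (by omega)] at h2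
    omega

lemma isChord_of {n : ℕ} [NeZero n] (x y : ZMod n) (h2 : 2 ≤ (y - x).val)
    (hn : (y - x).val + 2 ≤ n) : IsChord n s(x, y) := by
  intro i j hp
  rw [Sym2.eq_iff] at hp
  have hne : y - x ≠ 0 := by
    intro h; rw [h, ZMod.val_zero] at h2; omega
  rcases hp with ⟨hx, hy⟩ | ⟨hx, hy⟩
  · exact aux_ne i j (by rw [← hx, ← hy]; exact h2) (by rw [← hx, ← hy]; exact hn)
  · have hneg : (j - i) = -(y - x) := by rw [← hx, ← hy]; ring
    have hval : (j - i).val = n - (y - x).val := by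
      rw [hneg, ZMod.neg_val, if_neg hne]
    exact aux_ne i j (by omega) (by omega)

lemma isChord_nat {n : ℕ} [NeZero n] (b c : ℕ) (h2 : b + 2 ≤ c) (hn : c + 2 ≤ b + n) :
    IsChord n s(((b : ℕ) : ZMod n), ((c : ℕ) : ZMod n)) := by
  have hv : ((c : ZMod n) - (b : ZMod n)) = ((c - b : ℕ) : ZMod n) := by
    rw [Nat.cast_sub (by omega)]
  apply isChord_of
  · rw [hv, ZMod.val_natCast_of_lt (by omega)]; omega
  · rw [hv, ZMod.val_natCast_of_lt (by omega)]; omega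

lemma prod_cycInt {n : ℕ} [NeZero n] (b : ZMod n) (m : ℕ) (hm : m ≤ n) (f : ZMod n → ℤ) :
    ∏ x ∈ cycInt b m, f x = ∏ t ∈ Finset.range m, f (b + (t : ℕ)) := by
  rw [cycInt, Finset.prod_image]
  intro t1 h1 t2 h2 h
  rw [Finset.mem_coe, Finset.mem_range] at h1 h2
  have h' := add_left_cancel h
  have e1 : ((t1 : ZMod n)).val = t1 := ZMod.val_natCast_of_lt (by omega)
  have e2 : ((t2 : ZMod n)).val = t2 := ZMod.val_natCast_of_lt (by omega)
  rw [← e1, ← e2, h']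

lemma cons4 {n : ℕ} [NeZero n] (s sb : Sym2 (ZMod n) → ℤ)
    (hsb : ∀ e, IsChord n e → sb e = s e) (hcons : Consistent n s)
    (a p q r t : ℕ) (hp : 0 < p) (hq : 0 < q) (hr : 0 < r) (ht : 0 < t)
    (hsum : p + q + r + t = n) :
    (∏ x ∈ Finset.range p, ∏ y ∈ Finset.range r,
        sb s(((a + x : ℕ) : ZMod n), ((a + p + q + y : ℕ) : ZMod n))) = 1 ∨
    (∏ x ∈ Finset.range q, ∏ y ∈ Finset.range t,
        sb s(((a + p + x : ℕ) : ZMod n), ((a + p + q + r + y : ℕ) : ZMod n))) = 1 := by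
  set P : CyclicFourPartition n := ⟨(a : ZMod n), p, q, r, t, hp, hq, hr, ht, hsum⟩ with hP
  rcases hcons P with h | h
  · left
    rw [show P.A = cycInt (a : ZMod n) p from rfl,
        show P.C = cycInt ((a : ZMod n) + (p : ZMod n) + (q : ZMod n)) r from rfl] at h
    rw [prod_cycInt _ _ (by omega)] at h
    rw [← h]
    refine Finset.prod_congr rfl fun x hx => ?_
    rw [prod_cycInt _ _ (by omega)]
    refine Finset.prod_congr rfl fun y hy => ?_
    rw [Finset.mem_range] at hx hy
    have e1 : ((a + x : ℕ) : ZMod n) = (a : ZMod n) + (x : ℕ) := by push_cast; ring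
    have e2 : ((a + p + q + y : ℕ) : ZMod n)
        = (a : ZMod n) + (p : ZMod n) + (q : ZMod n) + (y : ℕ) := by push_cast; ring
    rw [← e1, ← e2]
    exact hsb _ (isChord_nat (a + x) (a + p + q + y) (by omega) (by omega))
  · right
    rw [show P.B = cycInt ((a : ZMod n) + (p : ZMod n)) q from rfl,
        show P.D = cycInt ((a : ZMod n) + (p : ZMod n) + (q : ZMod n) + (r : ZMod n)) t
          from rfl] at h
    rw [prod_cycInt _ _ (by omega)] at h
    rw [← h]
    refine Finset.prod_congr rfl fun x hx => ?_
    rw [prod_cycInt _ _ (by omega)]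
    refine Finset.prod_congr rfl fun y hy => ?_
    rw [Finset.mem_range] at hx hy
    have e1 : ((a + p + x : ℕ) : ZMod n) = (a : ZMod n) + (p : ZMod n) + (x : ℕ) := by
      push_cast; ring
    have e2 : ((a + p + q + r + y : ℕ) : ZMod n)
        = (a : ZMod n) + (p : ZMod n) + (q : ZMod n) + (r : ZMod n) + (y : ℕ) := by
      push_cast; ring
    rw [← e1, ← e2]
    exact hsb _ (isChord_nat (a + p + x) (a + p + q + r + y) (by omega) (by omega))

lemma prod_pm {α : Type*} (F : Finset α) (f : α → ℤ)
    (h : ∀ x ∈ F, f x = 1 ∨ f x = -1) :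
    (∏ x ∈ F, f x) = 1 ∨ (∏ x ∈ F, f x) = -1 :=
  Finset.prod_induction f (fun z => z = 1 ∨ z = -1)
    (by rintro x y (h1 | h1) (h2 | h2) <;> simp [h1, h2]) (by simp) h

lemma S_short {n ℓ : ℕ} [NeZero n] (S : ZMod n → ZMod n → ℤ)
    (hshort : ∀ x y : ZMod n, min (y - x).val (x - y).val < ℓ → S x y = 1)
    (hl : 0 < ℓ) (b c : ℕ) (hbc : b ≤ c) (hc : c < n)
    (h : min (c - b) (n - (c - b)) < ℓ) : S (b : ZMod n) (c : ZMod n) = 1 := by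
  apply hshort
  have e1 : ((c : ZMod n) - (b : ZMod n)) = ((c - b : ℕ) : ZMod n) := by
    rw [Nat.cast_sub hbc]
  rcases Nat.eq_or_lt_of_le hbc with he | hlt
  · rw [he, sub_self, ZMod.val_zero]
    simpa using hl
  · have val1 : ((c : ZMod n) - (b : ZMod n)).val = c - b := by
      rw [e1, ZMod.val_natCast_of_lt (by omega)]
    have hne : ((c : ZMod n) - (b : ZMod n)) ≠ 0 := by
      intro h0; rw [h0, ZMod.val_zero] at val1; omega
    have val2 : ((b : ZMod n) - (c : ZMod n)).val = n - (c - b) := by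
      have e2 : ((b : ZMod n) - (c : ZMod n)) = -(((c : ZMod n) - (b : ZMod n))) := by ring
      rw [e2, ZMod.neg_val, if_neg hne, val1]
    rw [val1, val2]
    exact h

lemma key {n ℓ : ℕ} [NeZero n] (hl3 : 3 ≤ ℓ) (hln : ℓ + 2 ≤ n)
    (S : ZMod n → ZMod n → ℤ)
    (hsymm : ∀ x y : ZMod n, S x y = S y x)
    (hsign : ∀ x y : ZMod n, S x y = 1 ∨ S x y = -1)
    (hshort : ∀ x y : ZMod n, min (y - x).val (x - y).val < ℓ → S x y = 1)
    (hneg : S ((0 : ℕ) : ZMod n) ((ℓ : ℕ) : ZMod n) = -1)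
    (hcons : ∀ a p q r t : ℕ, 0 < p → 0 < q → 0 < r → 0 < t → p + q + r + t = n →
      (∏ x ∈ Finset.range p, ∏ y ∈ Finset.range r,
          S (((a + x : ℕ)) : ZMod n) (((a + p + q + y : ℕ)) : ZMod n)) = 1 ∨
      (∏ x ∈ Finset.range q, ∏ y ∈ Finset.range t,
          S (((a + p + x : ℕ)) : ZMod n) (((a + p + q + r + y : ℕ)) : ZMod n)) = 1)
    (i : ℕ) (hi1 : ℓ + 1 ≤ i) (hi2 : i + 1 ≤ n)
    (ha : S ((i : ℕ) : ZMod n) ((0 : ℕ) : ZMod n) = 1)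
    (hd : S ((i : ℕ) : ZMod n) ((ℓ : ℕ) : ZMod n) = 1) :
    (∏ k ∈ Finset.range (ℓ - 1), S ((i : ℕ) : ZMod n) ((1 + k : ℕ) : ZMod n)) = 1 := by
  by_cases hsmall : n = ℓ + 2
  · -- then i = n - 1 = ℓ + 1 and all factors are short
    subst hsmall
    apply Finset.prod_eq_one
    intro k hk
    rw [Finset.mem_range] at hk
    have hieq : i = ℓ + 1 := by omega
    subst hieq
    rw [hsymm]
    apply S_short S hshort (by omega) (1 + k) (ℓ + 1) (by omega) (by omega)
    omega
  have hn3 : ℓ + 3 ≤ n := by omega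
  -- show the product is not -1
  rcases prod_pm _ _ (fun k _ => hsign _ _) with h | hT
  · exact h
  exfalso
  rcases Nat.eq_or_lt_of_le hi1 with hA | hi1'
  · -- Case A : i = ℓ + 1
    have hieq : i = ℓ + 1 := hA.symm
    subst hieq
    -- step 1 : S 1 (ℓ+1) = -1
    rw [show ℓ - 1 = (ℓ - 2) + 1 from by omega, Finset.prod_range_succ'] at hT
    have h1 : (∏ k ∈ Finset.range (ℓ - 2),
        S ((ℓ + 1 : ℕ) : ZMod n) ((1 + (k + 1) : ℕ) : ZMod n)) = 1 := by
      apply Finset.prod_eq_one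
      intro k hk
      rw [Finset.mem_range] at hk
      rw [show 1 + (k + 1) = 2 + k from by omega, hsymm]
      apply S_short S hshort (by omega) (2 + k) (ℓ + 1) (by omega) (by omega)
      omega
    rw [h1, one_mul] at hT
    have hb1 : S ((1 : ℕ) : ZMod n) ((ℓ + 1 : ℕ) : ZMod n) = -1 := by
      rw [hsymm]; rw [show (1 + 0 : ℕ) = 1 from rfl] at hT; exact hT
    -- step 2 : first partition, gives Z' = 1
    have Qa := hcons 0 2 (ℓ - 1) 1 (n - ℓ - 2) (by omega) (by omega) (by omega)
      (by omega) (by omega)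
    have hL : (∏ x ∈ Finset.range 2, ∏ y ∈ Finset.range 1,
        S ((0 + x : ℕ) : ZMod n) ((0 + 2 + (ℓ - 1) + y : ℕ) : ZMod n)) = -1 := by
      rw [show (2 : ℕ) = 1 + 1 from rfl, Finset.prod_range_succ, Finset.prod_range_one,
        Finset.prod_range_one, Finset.prod_range_one]
      rw [show (0 + 0 : ℕ) = 0 from rfl, show (0 + 1 : ℕ) = 1 from rfl,
        show (0 + 2 + (ℓ - 1) + 0 : ℕ) = ℓ + 1 from by omega]
      rw [hb1, hsymm ((0 : ℕ) : ZMod n), ha]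
      norm_num
    have hZ := Qa.resolve_left (by rw [hL]; norm_num)
    have eZ : (∏ x ∈ Finset.range (ℓ - 1), ∏ y ∈ Finset.range (n - ℓ - 2),
          S ((0 + 2 + x : ℕ) : ZMod n) ((0 + 2 + (ℓ - 1) + 1 + y : ℕ) : ZMod n))
        = (∏ x ∈ Finset.range (ℓ - 1), ∏ y ∈ Finset.range (n - ℓ - 2),
          S ((2 + x : ℕ) : ZMod n) ((ℓ + 2 + y : ℕ) : ZMod n)) := by
      refine Finset.prod_congr rfl fun x _ => Finset.prod_congr rfl fun y _ => ?_
      rw [show 0 + 2 + x = 2 + x from by omega,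
        show 0 + 2 + (ℓ - 1) + 1 + y = ℓ + 2 + y from by omega]
    rw [eZ] at hZ
    -- step 3 : second partition, contradiction
    have Qb := hcons 1 1 (ℓ - 1) 1 (n - ℓ - 1) (by omega) (by omega) (by omega)
      (by omega) (by omega)
    rcases Qb with h | h
    · rw [Finset.prod_range_one, Finset.prod_range_one,
        show (1 + 0 : ℕ) = 1 from rfl,
        show (1 + 1 + (ℓ - 1) + 0 : ℕ) = ℓ + 1 from by omega, hb1] at h
      omega
    · have eW : (∏ x ∈ Finset.range (ℓ - 1), ∏ y ∈ Finset.range (n - ℓ - 1),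
            S ((1 + 1 + x : ℕ) : ZMod n) ((1 + 1 + (ℓ - 1) + 1 + y : ℕ) : ZMod n))
          = (∏ x ∈ Finset.range (ℓ - 1), ∏ y ∈ Finset.range (n - ℓ - 1),
            S ((2 + x : ℕ) : ZMod n) ((ℓ + 2 + y : ℕ) : ZMod n)) := by
        refine Finset.prod_congr rfl fun x _ => Finset.prod_congr rfl fun y _ => ?_
        rw [show 1 + 1 + x = 2 + x from by omega,
          show 1 + 1 + (ℓ - 1) + 1 + y = ℓ + 2 + y from by omega]
      rw [eW] at h
      have esplit : (∏ x ∈ Finset.range (ℓ - 1), ∏ y ∈ Finset.range (n - ℓ - 1),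
            S ((2 + x : ℕ) : ZMod n) ((ℓ + 2 + y : ℕ) : ZMod n))
          = (∏ x ∈ Finset.range (ℓ - 1), ∏ y ∈ Finset.range (n - ℓ - 2),
            S ((2 + x : ℕ) : ZMod n) ((ℓ + 2 + y : ℕ) : ZMod n))
          * (∏ x ∈ Finset.range (ℓ - 1), S ((2 + x : ℕ) : ZMod n) ((0 : ℕ) : ZMod n)) := by
        rw [← Finset.prod_mul_distrib]
        refine Finset.prod_congr rfl fun x _ => ?_
        rw [show n - ℓ - 1 = (n - ℓ - 2) + 1 from by omega, Finset.prod_range_succ]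
        congr 2
        rw [show (ℓ + 2 + (n - ℓ - 2) : ℕ) = n from by omega]
        simp [ZMod.natCast_self]
      have elast : (∏ x ∈ Finset.range (ℓ - 1),
          S ((2 + x : ℕ) : ZMod n) ((0 : ℕ) : ZMod n)) = -1 := by
        rw [show ℓ - 1 = (ℓ - 2) + 1 from by omega, Finset.prod_range_succ]
        have hrest : (∏ x ∈ Finset.range (ℓ - 2),
            S ((2 + x : ℕ) : ZMod n) ((0 : ℕ) : ZMod n)) = 1 := by
          apply Finset.prod_eq_one
          intro x hx
          rw [Finset.mem_range] at hx
          rw [hsymm]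
          apply S_short S hshort (by omega) 0 (2 + x) (by omega) (by omega)
          omega
        rw [hrest, one_mul, show 2 + (ℓ - 2) = ℓ from by omega, hsymm, hneg]
      rw [esplit, hZ, one_mul, elast] at h
      omega
  rcases Nat.eq_or_lt_of_le hi2 with hB | hi2'
  · -- Case B : i = n - 1 (and i ≥ ℓ + 2)
    have hieq : i = n - 1 := by omega
    have hil : ℓ + 2 ≤ i := by omega
    subst hieq
    -- step 1 : S (ℓ-1) (n-1) = -1
    rw [show ℓ - 1 = (ℓ - 2) + 1 from by omega, Finset.prod_range_succ] at hT
    have h1 : (∏ k ∈ Finset.range (ℓ - 2),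
        S ((n - 1 : ℕ) : ZMod n) ((1 + k : ℕ) : ZMod n)) = 1 := by
      apply Finset.prod_eq_one
      intro k hk
      rw [Finset.mem_range] at hk
      rw [hsymm]
      apply S_short S hshort (by omega) (1 + k) (n - 1) (by omega) (by omega)
      omega
    rw [h1, one_mul, show (1 + (ℓ - 2) : ℕ) = ℓ - 1 from by omega] at hT
    have hc1 : S ((ℓ - 1 : ℕ) : ZMod n) ((n - 1 : ℕ) : ZMod n) = -1 := by
      rw [hsymm]; exact hT
    -- step 2 : partition Qa', gives Z' = 1
    have Qa := hcons (ℓ - 1) 2 (n - ℓ - 2) 1 (ℓ - 1) (by omega) (by omega) (by omega)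
      (by omega) (by omega)
    have hL : (∏ x ∈ Finset.range 2, ∏ y ∈ Finset.range 1,
        S ((ℓ - 1 + x : ℕ) : ZMod n) ((ℓ - 1 + 2 + (n - ℓ - 2) + y : ℕ) : ZMod n)) = -1 := by
      rw [show (2 : ℕ) = 1 + 1 from rfl, Finset.prod_range_succ, Finset.prod_range_one,
        Finset.prod_range_one, Finset.prod_range_one]
      rw [show (ℓ - 1 + 0 : ℕ) = ℓ - 1 from by omega,
        show (ℓ - 1 + 1 : ℕ) = ℓ from by omega,
        show (ℓ - 1 + 2 + (n - ℓ - 2) + 0 : ℕ) = n - 1 from by omega]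
      rw [hc1, hsymm ((ℓ : ℕ) : ZMod n), hd]
      norm_num
    have hZ := Qa.resolve_left (by rw [hL]; norm_num)
    have eZ : (∏ x ∈ Finset.range (n - ℓ - 2), ∏ y ∈ Finset.range (ℓ - 1),
          S ((ℓ - 1 + 2 + x : ℕ) : ZMod n) ((ℓ - 1 + 2 + (n - ℓ - 2) + 1 + y : ℕ) : ZMod n))
        = (∏ x ∈ Finset.range (n - ℓ - 2), ∏ y ∈ Finset.range (ℓ - 1),
          S ((ℓ + 1 + x : ℕ) : ZMod n) ((y : ℕ) : ZMod n)) := by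
      refine Finset.prod_congr rfl fun x _ => Finset.prod_congr rfl fun y _ => ?_
      rw [show ℓ - 1 + 2 + x = ℓ + 1 + x from by omega,
        show ℓ - 1 + 2 + (n - ℓ - 2) + 1 + y = n + y from by omega]
      congr 1
      push_cast
      simp [ZMod.natCast_self]
    rw [eZ] at hZ
    -- step 3 : partition Qb', contradiction
    have Qb := hcons (ℓ - 1) 1 (n - ℓ - 1) 1 (ℓ - 1) (by omega) (by omega) (by omega)
      (by omega) (by omega)
    rcases Qb with h | h
    · rw [Finset.prod_range_one, Finset.prod_range_one,
        show (ℓ - 1 + 0 : ℕ) = ℓ - 1 from by omega,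
        show (ℓ - 1 + 1 + (n - ℓ - 1) + 0 : ℕ) = n - 1 from by omega, hc1] at h
      omega
    · have eW : (∏ x ∈ Finset.range (n - ℓ - 1), ∏ y ∈ Finset.range (ℓ - 1),
            S ((ℓ - 1 + 1 + x : ℕ) : ZMod n) ((ℓ - 1 + 1 + (n - ℓ - 1) + 1 + y : ℕ) : ZMod n))
          = (∏ x ∈ Finset.range (n - ℓ - 1), ∏ y ∈ Finset.range (ℓ - 1),
            S ((ℓ + x : ℕ) : ZMod n) ((y : ℕ) : ZMod n)) := by
        refine Finset.prod_congr rfl fun x _ => Finset.prod_congr rfl fun y _ => ?_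
        rw [show ℓ - 1 + 1 + x = ℓ + x from by omega,
          show ℓ - 1 + 1 + (n - ℓ - 1) + 1 + y = n + y from by omega]
        congr 1
        push_cast
        simp [ZMod.natCast_self]
      rw [eW] at h
      rw [show n - ℓ - 1 = (n - ℓ - 2) + 1 from by omega, Finset.prod_range_succ'] at h
      have e1 : (∏ x ∈ Finset.range (n - ℓ - 2), ∏ y ∈ Finset.range (ℓ - 1),
            S ((ℓ + (x + 1) : ℕ) : ZMod n) ((y : ℕ) : ZMod n))
          = (∏ x ∈ Finset.range (n - ℓ - 2), ∏ y ∈ Finset.range (ℓ - 1),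
            S ((ℓ + 1 + x : ℕ) : ZMod n) ((y : ℕ) : ZMod n)) := by
        refine Finset.prod_congr rfl fun x _ => Finset.prod_congr rfl fun y _ => ?_
        rw [show ℓ + (x + 1) = ℓ + 1 + x from by omega]
      rw [e1, hZ, one_mul, show (ℓ + 0 : ℕ) = ℓ from by omega] at h
      -- h : ∏ y < ℓ - 1, S ℓ y = 1, but this product is -1
      rw [show ℓ - 1 = (ℓ - 2) + 1 from by omega, Finset.prod_range_succ'] at h
      have e2 : (∏ y ∈ Finset.range (ℓ - 2),
          S ((ℓ : ℕ) : ZMod n) ((y + 1 : ℕ) : ZMod n)) = 1 := by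
        apply Finset.prod_eq_one
        intro y hy
        rw [Finset.mem_range] at hy
        rw [hsymm]
        apply S_short S hshort (by omega) (y + 1) ℓ (by omega) (by omega)
        omega
      rw [e2, one_mul, hsymm ((ℓ : ℕ) : ZMod n) ((0 : ℕ) : ZMod n), hneg] at h
      omega
  · -- Case C : ℓ + 2 ≤ i ≤ n - 2
    have hil : ℓ + 2 ≤ i := hi1'
    have hin : i + 2 ≤ n := hi2'
    -- P1
    have P1 := hcons i 1 (n - i) (ℓ - 1) (i - ℓ) (by omega) (by omega) (by omega)
      (by omega) (by omega)
    have eL1 : (∏ x ∈ Finset.range 1, ∏ y ∈ Finset.range (ℓ - 1),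
          S ((i + x : ℕ) : ZMod n) ((i + 1 + (n - i) + y : ℕ) : ZMod n))
        = (∏ k ∈ Finset.range (ℓ - 1), S ((i : ℕ) : ZMod n) ((1 + k : ℕ) : ZMod n)) := by
      rw [Finset.prod_range_one]
      refine Finset.prod_congr rfl fun y _ => ?_
      rw [show (i + 0 : ℕ) = i from by omega,
        show i + 1 + (n - i) + y = n + (1 + y) from by omega]
      congr 1
      push_cast
      simp [ZMod.natCast_self]
    rw [eL1, hT] at P1
    have hY1 := P1.resolve_left (by norm_num)
    have eY1 : (∏ x ∈ Finset.range (n - i), ∏ y ∈ Finset.range (i - ℓ),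
          S ((i + 1 + x : ℕ) : ZMod n) ((i + 1 + (n - i) + (ℓ - 1) + y : ℕ) : ZMod n))
        = (∏ x ∈ Finset.range (n - i), ∏ y ∈ Finset.range (i - ℓ),
          S ((i + 1 + x : ℕ) : ZMod n) ((ℓ + y : ℕ) : ZMod n)) := by
      refine Finset.prod_congr rfl fun x _ => Finset.prod_congr rfl fun y _ => ?_
      rw [show i + 1 + (n - i) + (ℓ - 1) + y = n + (ℓ + y) from by omega]
      congr 1
      push_cast
      simp [ZMod.natCast_self]
    rw [eY1] at hY1
    -- P2
    have P2 := hcons i 1 (n - i - 1) ℓ (i - ℓ) (by omega) (by omega) (by omega)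
      (by omega) (by omega)
    have eL2 : (∏ x ∈ Finset.range 1, ∏ y ∈ Finset.range ℓ,
          S ((i + x : ℕ) : ZMod n) ((i + 1 + (n - i - 1) + y : ℕ) : ZMod n))
        = (∏ y ∈ Finset.range ℓ, S ((i : ℕ) : ZMod n) ((y : ℕ) : ZMod n)) := by
      rw [Finset.prod_range_one]
      refine Finset.prod_congr rfl fun y _ => ?_
      rw [show (i + 0 : ℕ) = i from by omega,
        show i + 1 + (n - i - 1) + y = n + y from by omega]
      congr 1
      push_cast
      simp [ZMod.natCast_self]
    have eL2' : (∏ y ∈ Finset.range ℓ, S ((i : ℕ) : ZMod n) ((y : ℕ) : ZMod n)) = -1 := by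
      rw [show ℓ = (ℓ - 1) + 1 from by omega, Finset.prod_range_succ']
      have e : (∏ y ∈ Finset.range (ℓ - 1),
            S ((i : ℕ) : ZMod n) ((y + 1 : ℕ) : ZMod n))
          = (∏ k ∈ Finset.range (ℓ - 1), S ((i : ℕ) : ZMod n) ((1 + k : ℕ) : ZMod n)) := by
        refine Finset.prod_congr rfl fun y _ => ?_
        rw [show y + 1 = 1 + y from by omega]
      rw [e, hT, ha]
      norm_num
    rw [eL2, eL2'] at P2
    have hY2 := P2.resolve_left (by norm_num)
    have eY2 : (∏ x ∈ Finset.range (n - i - 1), ∏ y ∈ Finset.range (i - ℓ),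
          S ((i + 1 + x : ℕ) : ZMod n) ((i + 1 + (n - i - 1) + ℓ + y : ℕ) : ZMod n))
        = (∏ x ∈ Finset.range (n - i - 1), ∏ y ∈ Finset.range (i - ℓ),
          S ((i + 1 + x : ℕ) : ZMod n) ((ℓ + y : ℕ) : ZMod n)) := by
      refine Finset.prod_congr rfl fun x _ => Finset.prod_congr rfl fun y _ => ?_
      rw [show i + 1 + (n - i - 1) + ℓ + y = n + (ℓ + y) from by omega]
      congr 1
      push_cast
      simp [ZMod.natCast_self]
    rw [eY2] at hY2
    -- relation between Y1 and Y2 : E1 = 1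
    have hE1 : (∏ y ∈ Finset.range (i - ℓ),
        S ((0 : ℕ) : ZMod n) ((ℓ + y : ℕ) : ZMod n)) = 1 := by
      rw [show n - i = (n - i - 1) + 1 from by omega, Finset.prod_range_succ] at hY1
      have e : (∏ y ∈ Finset.range (i - ℓ),
            S ((i + 1 + (n - i - 1) : ℕ) : ZMod n) ((ℓ + y : ℕ) : ZMod n))
          = (∏ y ∈ Finset.range (i - ℓ),
            S ((0 : ℕ) : ZMod n) ((ℓ + y : ℕ) : ZMod n)) := by
        refine Finset.prod_congr rfl fun y _ => ?_
        rw [show i + 1 + (n - i - 1) = n from by omega]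
        congr 1
        simp [ZMod.natCast_self]
      rw [e, hY2, one_mul] at hY1
      exact hY1
    -- P3
    have P3 := hcons i 1 (n - i) ℓ (i - ℓ - 1) (by omega) (by omega) (by omega)
      (by omega) (by omega)
    have eL3 : (∏ x ∈ Finset.range 1, ∏ y ∈ Finset.range ℓ,
          S ((i + x : ℕ) : ZMod n) ((i + 1 + (n - i) + y : ℕ) : ZMod n))
        = (∏ y ∈ Finset.range ℓ, S ((i : ℕ) : ZMod n) ((1 + y : ℕ) : ZMod n)) := by
      rw [Finset.prod_range_one]
      refine Finset.prod_congr rfl fun y _ => ?_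
      rw [show (i + 0 : ℕ) = i from by omega,
        show i + 1 + (n - i) + y = n + (1 + y) from by omega]
      congr 1
      push_cast
      simp [ZMod.natCast_self]
    have eL3' : (∏ y ∈ Finset.range ℓ, S ((i : ℕ) : ZMod n) ((1 + y : ℕ) : ZMod n)) = -1 := by
      rw [show ℓ = (ℓ - 1) + 1 from by omega, Finset.prod_range_succ, hT,
        show 1 + (ℓ - 1) = ℓ from by omega, hd]
      norm_num
    rw [eL3, eL3'] at P3
    have hY3 := P3.resolve_left (by norm_num)
    have eY3 : (∏ x ∈ Finset.range (n - i), ∏ y ∈ Finset.range (i - ℓ - 1),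
          S ((i + 1 + x : ℕ) : ZMod n) ((i + 1 + (n - i) + ℓ + y : ℕ) : ZMod n))
        = (∏ x ∈ Finset.range (n - i), ∏ y ∈ Finset.range (i - ℓ - 1),
          S ((i + 1 + x : ℕ) : ZMod n) ((ℓ + 1 + y : ℕ) : ZMod n)) := by
      refine Finset.prod_congr rfl fun x _ => Finset.prod_congr rfl fun y _ => ?_
      rw [show i + 1 + (n - i) + ℓ + y = n + (ℓ + 1 + y) from by omega]
      congr 1
      push_cast
      simp [ZMod.natCast_self]
    rw [eY3] at hY3
    -- P4
    have P4 := hcons i 1 (n - i - 1) (ℓ + 1) (i - ℓ - 1) (by omega) (by omega) (by omega)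
      (by omega) (by omega)
    have eL4 : (∏ x ∈ Finset.range 1, ∏ y ∈ Finset.range (ℓ + 1),
          S ((i + x : ℕ) : ZMod n) ((i + 1 + (n - i - 1) + y : ℕ) : ZMod n))
        = (∏ y ∈ Finset.range (ℓ + 1), S ((i : ℕ) : ZMod n) ((y : ℕ) : ZMod n)) := by
      rw [Finset.prod_range_one]
      refine Finset.prod_congr rfl fun y _ => ?_
      rw [show (i + 0 : ℕ) = i from by omega,
        show i + 1 + (n - i - 1) + y = n + y from by omega]
      congr 1
      push_cast
      simp [ZMod.natCast_self]
    have eL4' : (∏ y ∈ Finset.range (ℓ + 1),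
        S ((i : ℕ) : ZMod n) ((y : ℕ) : ZMod n)) = -1 := by
      rw [Finset.prod_range_succ']
      have e : (∏ y ∈ Finset.range ℓ,
            S ((i : ℕ) : ZMod n) ((y + 1 : ℕ) : ZMod n))
          = (∏ y ∈ Finset.range ℓ, S ((i : ℕ) : ZMod n) ((1 + y : ℕ) : ZMod n)) := by
        refine Finset.prod_congr rfl fun y _ => ?_
        rw [show y + 1 = 1 + y from by omega]
      rw [e, eL3', ha]
      norm_num
    rw [eL4, eL4'] at P4
    have hY4 := P4.resolve_left (by norm_num)
    have eY4 : (∏ x ∈ Finset.range (n - i - 1), ∏ y ∈ Finset.range (i - ℓ - 1),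
          S ((i + 1 + x : ℕ) : ZMod n) ((i + 1 + (n - i - 1) + (ℓ + 1) + y : ℕ) : ZMod n))
        = (∏ x ∈ Finset.range (n - i - 1), ∏ y ∈ Finset.range (i - ℓ - 1),
          S ((i + 1 + x : ℕ) : ZMod n) ((ℓ + 1 + y : ℕ) : ZMod n)) := by
      refine Finset.prod_congr rfl fun x _ => Finset.prod_congr rfl fun y _ => ?_
      rw [show i + 1 + (n - i - 1) + (ℓ + 1) + y = n + (ℓ + 1 + y) from by omega]
      congr 1
      push_cast
      simp [ZMod.natCast_self]
    rw [eY4] at hY4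
    -- relation between Y3 and Y4 : E2 = 1
    have hE2 : (∏ y ∈ Finset.range (i - ℓ - 1),
        S ((0 : ℕ) : ZMod n) ((ℓ + 1 + y : ℕ) : ZMod n)) = 1 := by
      rw [show n - i = (n - i - 1) + 1 from by omega, Finset.prod_range_succ] at hY3
      have e : (∏ y ∈ Finset.range (i - ℓ - 1),
            S ((i + 1 + (n - i - 1) : ℕ) : ZMod n) ((ℓ + 1 + y : ℕ) : ZMod n))
          = (∏ y ∈ Finset.range (i - ℓ - 1),
            S ((0 : ℕ) : ZMod n) ((ℓ + 1 + y : ℕ) : ZMod n)) := by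
        refine Finset.prod_congr rfl fun y _ => ?_
        rw [show i + 1 + (n - i - 1) = n from by omega]
        congr 1
        simp [ZMod.natCast_self]
      rw [e, hY4, one_mul] at hY3
      exact hY3
    -- final contradiction : E1 = E2 * S 0 ℓ = -1 but E1 = 1
    rw [show i - ℓ = (i - ℓ - 1) + 1 from by omega, Finset.prod_range_succ'] at hE1
    have e : (∏ y ∈ Finset.range (i - ℓ - 1),
          S ((0 : ℕ) : ZMod n) ((ℓ + (y + 1) : ℕ) : ZMod n))
        = (∏ y ∈ Finset.range (i - ℓ - 1),
          S ((0 : ℕ) : ZMod n) ((ℓ + 1 + y : ℕ) : ZMod n)) := by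
      refine Finset.prod_congr rfl fun y _ => ?_
      rw [show ℓ + (y + 1) = ℓ + 1 + y from by omega]
    rw [e, hE2, one_mul, show (ℓ + 0 : ℕ) = ℓ from by omega, hneg] at hE1
    omega


/-- Let `3 ≤ ℓ ≤ n - 2` and let `s` be a consistent sign pattern whose
shortest negative chord is `{0, ℓ}`. Then for `ℓ+1 ≤ i ≤ n-1`, none of the three
problematic sign tuples (the first three rows of Table 4) occurs. -/
theorem consistent_avoids_first_three_rows (n ℓ : ℕ) [NeZero n]
    (hl3 : 3 ≤ ℓ) (hln : ℓ ≤ n - 2) (s : Sym2 (ZMod n) → ℤ)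
    (hs : ∀ e ∈ chords n, s e = 1 ∨ s e = -1)
    (hcons : Consistent n s)
    (hneg : s s((0 : ZMod n), (ℓ : ZMod n)) = -1)
    (hshort : ∀ e ∈ chords n, chordLength n e < ℓ → s e = 1) :
    ∀ i : ℕ, ℓ + 1 ≤ i → i ≤ n - 1 →
      ∀ sb : Sym2 (ZMod n) → ℤ, sb = (fun p => if p ∈ chords n then s p else 1) →
      ∀ M : ℤ, M = ∏ k ∈ Finset.Icc 2 (ℓ - 2), sb s((i : ZMod n), (k : ZMod n)) →
      ¬ ((M = -1 ∧ sb s((i : ZMod n), (0 : ZMod n)) = 1 ∧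
            sb s((1 : ZMod n), (i : ZMod n)) = 1 ∧
            sb s((ℓ : ZMod n) - 1, (i : ZMod n)) = 1 ∧
            sb s((ℓ : ZMod n), (i : ZMod n)) = 1) ∨
         (M = 1 ∧ sb s((i : ZMod n), (0 : ZMod n)) = 1 ∧
            sb s((1 : ZMod n), (i : ZMod n)) = -1 ∧
            sb s((ℓ : ZMod n) - 1, (i : ZMod n)) = 1 ∧
            sb s((ℓ : ZMod n), (i : ZMod n)) = 1) ∨
         (M = 1 ∧ sb s((i : ZMod n), (0 : ZMod n)) = 1 ∧
            sb s((1 : ZMod n), (i : ZMod n)) = 1 ∧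
            sb s((ℓ : ZMod n) - 1, (i : ZMod n)) = -1 ∧
            sb s((ℓ : ZMod n), (i : ZMod n)) = 1)) := by
  intro i hi1 hi2 sb hsb M hM hrows
  have hn2 : ℓ + 2 ≤ n := by omega
  have hsb1 : ∀ e, IsChord n e → sb e = s e := by
    intro e he
    rw [hsb]
    simp only
    rw [if_pos (show e ∈ chords n from Finset.mem_filter.mpr ⟨Finset.mem_univ e, he⟩)]
  have hsb2 : ∀ e, ¬IsChord n e → sb e = 1 := by
    intro e he
    rw [hsb]
    simp only
    rw [if_neg (show ¬ e ∈ chords n from fun hmem => he (Finset.mem_filter.mp hmem).2)]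
  have ha' : sb s((i : ZMod n), (0 : ZMod n)) = 1 := by
    rcases hrows with ⟨_, h, _, _, _⟩ | ⟨_, h, _, _, _⟩ | ⟨_, h, _, _, _⟩ <;> exact h
  have hd' : sb s((ℓ : ZMod n), (i : ZMod n)) = 1 := by
    rcases hrows with ⟨_, _, _, _, h⟩ | ⟨_, _, _, _, h⟩ | ⟨_, _, _, _, h⟩ <;> exact h
  have hT' : sb s((1 : ZMod n), (i : ZMod n)) *
      (sb s((ℓ : ZMod n) - 1, (i : ZMod n)) * M) = -1 := by
    rcases hrows with ⟨h1, _, h2, h3, _⟩ | ⟨h1, _, h2, h3, _⟩ | ⟨h1, _, h2, h3, _⟩ <;>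
      rw [h1, h2, h3] <;> norm_num
  have KEY := key (n := n) (ℓ := ℓ) hl3 hn2 (fun x y => sb s(x, y))
    (fun x y => by simp only [Sym2.eq_swap])
    (fun x y => by
      by_cases hc : IsChord n s(x, y)
      · rw [hsb1 _ hc]
        exact hs _ (Finset.mem_filter.mpr ⟨Finset.mem_univ _, hc⟩)
      · rw [hsb2 _ hc]
        left; rfl)
    (fun x y h => by
      by_cases hc : IsChord n s(x, y)
      · rw [hsb1 _ hc]
        exact hshort _ (Finset.mem_filter.mpr ⟨Finset.mem_univ _, hc⟩)
          (by simpa [chordLength] using h)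
      · exact hsb2 _ hc)
    (by
      rw [hsb1 _ (isChord_nat 0 ℓ (by omega) (by omega))]
      simpa using hneg)
    (fun a p q r t hp hq hr ht hsum => cons4 s sb hsb1 hcons a p q r t hp hq hr ht hsum)
    i hi1 (by omega)
    (by simpa using ha')
    (by rw [Sym2.eq_swap]; exact hd')
  have e0 : (∏ k ∈ Finset.Ico 1 ℓ, sb s((i : ZMod n), (k : ZMod n)))
      = ∏ k ∈ Finset.range (ℓ - 1), sb s((i : ZMod n), ((1 + k : ℕ) : ZMod n)) :=
    Finset.prod_Ico_eq_prod_range _ _ _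
  rw [← e0] at KEY
  have hset : Finset.Ico 1 ℓ = insert 1 (insert (ℓ - 1) (Finset.Icc 2 (ℓ - 2))) := by
    ext x
    simp only [Finset.mem_Ico, Finset.mem_insert, Finset.mem_Icc]
    omega
  rw [hset, Finset.prod_insert (by simp only [Finset.mem_insert, Finset.mem_Icc]; omega),
    Finset.prod_insert (by simp only [Finset.mem_Icc]; omega)] at KEY
  have ec1 : sb s((i : ZMod n), ((1 : ℕ) : ZMod n)) = sb s((1 : ZMod n), (i : ZMod n)) := by
    rw [Nat.cast_one, Sym2.eq_swap]
  have ec2 : sb s((i : ZMod n), ((ℓ - 1 : ℕ) : ZMod n))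
      = sb s((ℓ : ZMod n) - 1, (i : ZMod n)) := by
    rw [Nat.cast_sub (by omega : 1 ≤ ℓ), Nat.cast_one, Sym2.eq_swap]
  rw [ec1, ec2, ← hM, hT'] at KEY
  exact absurd KEY (by norm_num)

end M0n
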